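/- Let M be a matroid on {1, …, n} with base family 𝓑, let B ∈ 𝓑, and let v ∉ B. Suppose there exists b ∈ B with B' := (B \ {b}) ∪ {v} ∈ 𝓑, and suppose that every t ∈ B with (B \ {t}) ∪ {v} ∈ 𝓑 satisfies t >_lex v (i.e., t < v as integers). Then b ∈ set(B') and set(B) ⊆ set(B'). -/

import Mathlib

/-- Two sets are *adjacent* if each has exactly one element outside the other. -/
def AdjacentSets {α : Type*} (B C : Set α) : Prop :=
  (B \ C).ncard = 1 ∧ (C \ B).ncard = 1

/-- The *adjacency family* of a family of sets: all unions of adjacent pairs of members. -/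
def adjFam {α : Type*} (𝓕 : Set (Set α)) : Set (Set α) :=
  {U | ∃ B ∈ 𝓕, ∃ C ∈ 𝓕, AdjacentSets B C ∧ U = B ∪ C}

/-- For a family `𝓑` of subsets of `{1, …, n}` (ordered so that `i >_lex j ↔ i < j` as
integers) and `B ∈ 𝓑`, the set `set(B)` consists of all `e ∉ B` for which there exists
`t ∈ B` with `e >_lex t` (that is, `e < t`) and `(B \ {t}) ∪ {e} ∈ 𝓑`. -/
def lexSet {n : ℕ} (𝓑 : Set (Set (Fin n))) (B : Set (Fin n)) : Set (Fin n) :=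
  {e | e ∉ B ∧ ∃ t ∈ B, e < t ∧ insert e (B \ {t}) ∈ 𝓑}

/-- `S_ℓ(𝓑) = { B ∪ E : B ∈ 𝓑, E ⊆ set(B), |E| = ℓ }`, the family of supports of the
`ℓ`-th multigraded shifts of the matroidal ideal of `𝓑`. -/
def shiftFam {n : ℕ} (𝓑 : Set (Set (Fin n))) (ℓ : ℕ) : Set (Set (Fin n)) :=
  {U | ∃ B ∈ 𝓑, ∃ E, E ⊆ lexSet 𝓑 B ∧ E.ncard = ℓ ∧ U = B ∪ E}

/-- Let `M` be a matroid on `{1, …, n}` with base family `𝓑`, let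
`B ∈ 𝓑`, and let `v ∉ B`.  Suppose there exists `b ∈ B` with
`B' := (B \ {b}) ∪ {v} ∈ 𝓑`, and suppose that every `t ∈ B` with `(B \ {t}) ∪ {v} ∈ 𝓑`
satisfies `t >_lex v` (i.e. `t < v` as integers).  Then `b ∈ set(B')` and
`set(B) ⊆ set(B')`. -/

lemma dual_exchange {α : Type*} (M : Matroid α) (hE : M.E = Set.univ)
    {X Y : Set α} (hX : M.IsBase X) (hY : M.IsBase Y) {z : α} (hzY : z ∈ Y) (hzX : z ∉ X) :
    ∃ s ∈ X, s ∉ Y ∧ M.IsBase (insert z (X \ {s})) := by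
  have hX' : M✶.IsBase (M.E \ X) := hX.compl_isBase_dual
  have hY' : M✶.IsBase (M.E \ Y) := hY.compl_isBase_dual
  have hz : z ∈ (M.E \ X) \ (M.E \ Y) := by simp [hE, hzX, hzY]
  obtain ⟨s, hs, hbase⟩ := hX'.exchange hY' hz
  have hsX : s ∈ X := by have := hs.2; simp [hE] at this; tauto
  have hsY : s ∉ Y := by have := hs.1; simp [hE] at this; tauto
  refine ⟨s, hsX, hsY, ?_⟩
  have h2 := hbase.compl_isBase_of_dual
  have heq : M.E \ insert s ((M.E \ X) \ {z}) = insert z (X \ {s}) := by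
    have hzs : z ≠ s := fun h => hzX (h ▸ hsX)
    ext w
    simp only [hE, Set.mem_diff, Set.mem_insert_iff, Set.mem_univ, true_and,
      Set.mem_singleton_iff, not_or, not_and, not_not]
    constructor
    · rintro ⟨hws, h⟩
      by_cases hwz : w = z
      · exact Or.inl hwz
      · exact Or.inr ⟨by_contra fun hwX => hwz (h hwX), hws⟩
    · rintro (rfl | ⟨hwX, hws⟩)
      · exact ⟨hzs, fun _ => rfl⟩
      · exact ⟨hws, fun h => absurd hwX h⟩
  rwa [heq] at h2

theorem lexSet_subset_of_pivot {n : ℕ} (M : Matroid (Fin n))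
    (hE : M.E = Set.univ) (𝓑 : Set (Set (Fin n))) (h𝓑 : 𝓑 = {B | M.IsBase B})
    (B : Set (Fin n)) (hB : B ∈ 𝓑) (v : Fin n) (hv : v ∉ B)
    (b : Fin n) (hb : b ∈ B) (B' : Set (Fin n)) (hB'def : B' = insert v (B \ {b}))
    (hB' : B' ∈ 𝓑)
    (hmin : ∀ t ∈ B, insert v (B \ {t}) ∈ 𝓑 → t < v) :
    b ∈ lexSet 𝓑 B' ∧ lexSet 𝓑 B ⊆ lexSet 𝓑 B' := by
  have hmem : ∀ S : Set (Fin n), S ∈ 𝓑 ↔ M.IsBase S := by simp [h𝓑]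
  have hBb : M.IsBase B := (hmem B).1 hB
  have hB'b : M.IsBase B' := (hmem B').1 hB'
  have hbv : b < v := hmin b hb (hB'def ▸ hB')
  have hbne : b ≠ v := ne_of_lt hbv
  have hbB' : b ∉ B' := by
    rw [hB'def]; simp [hbne]
  have hvB' : v ∈ B' := by rw [hB'def]; simp
  have hB'v : B' \ {v} = B \ {b} := by
    rw [hB'def, Set.insert_diff_self_of_notMem (by simp [hv])]
  constructor
  · refine ⟨hbB', v, hvB', hbv, ?_⟩
    rw [hB'v, Set.insert_diff_singleton, Set.insert_eq_self.2 hb]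
    exact hB
  · rintro e ⟨heB, t, htB, het, hC⟩
    have hCb : M.IsBase (insert e (B \ {t})) := (hmem _).1 hC
    have hev : e ≠ v := by
      rintro rfl
      exact absurd het (not_lt.2 (le_of_lt (hmin t htB hC)))
    have heB' : e ∉ B' := by
      rw [hB'def]; simp only [Set.mem_insert_iff, Set.mem_diff]
      rintro (rfl | ⟨h, _⟩) <;> [exact hev rfl; exact heB h]
    by_cases hbt : b = t
    · subst hbt
      refine ⟨heB', v, hvB', lt_trans het hbv, ?_⟩
      rw [hB'v]; exact hC
    · have htB' : t ∈ B' := by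
        rw [hB'def]
        exact Or.inr ⟨htB, fun h => hbt ((Set.mem_singleton_iff.1 h).symm ▸ rfl)⟩
      have hvC : v ∉ insert e (B \ {t}) := by
        simp only [Set.mem_insert_iff, Set.mem_diff]
        rintro (rfl | ⟨h, _⟩) <;> [exact hev rfl; exact hv h]
      obtain ⟨s, hsC, hsB', hsbase⟩ := dual_exchange M hE hCb hB'b hvB' hvC
      have hse : s = e ∨ s = b := by
        rcases hsC with rfl | ⟨hsB, hst⟩
        · exact Or.inl rfl
        · right
          by_contra hsb
          apply hsB'
          rw [hB'def]
          exact Or.inr ⟨hsB, hsb⟩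
      rcases hse with hseq | hseq
      · -- s = e : insert v (B \ {t}) is a base, so t < v, hence e < v
        rw [hseq] at hsbase
        have heBt : e ∉ B \ {t} := fun h => heB h.1
        rw [Set.insert_diff_self_of_notMem heBt] at hsbase
        have htv : t < v := hmin t htB ((hmem _).2 hsbase)
        have hevlt : e < v := lt_trans het htv
        obtain ⟨s', hs'B', hs'C, hs'base⟩ := dual_exchange M hE hB'b hCb
          (Set.mem_insert e _) heB'
        have hs' : s' = v ∨ s' = t := by
          rw [hB'def] at hs'B'
          rcases hs'B' with h | ⟨hsB, _⟩
          · exact Or.inl h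
          · right
            by_contra hst
            exact hs'C (Or.inr ⟨hsB, hst⟩)
        refine ⟨heB', s', ?_, ?_, (hmem _).2 hs'base⟩
        · rcases hs' with h | h <;> rw [h]
          · exact hvB'
          · exact htB'
        · rcases hs' with h | h <;> rw [h]
          · exact hevlt
          · exact het
      · -- s = b : insert v (C \ {b}) = insert e (B' \ {t})
        rw [hseq] at hsbase
        have hvt : v ≠ t := fun h => hv (h ▸ htB)
        have heb : e ≠ b := fun h => heB (h ▸ hb)
        have hkey : insert v (insert e (B \ {t}) \ {b}) = insert e (B' \ {t}) := by
          rw [hB'def]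
          ext w
          simp only [Set.mem_insert_iff, Set.mem_diff, Set.mem_singleton_iff]
          constructor
          · rintro (rfl | ⟨(rfl | ⟨hwB, hwt⟩), hwb⟩)
            · exact Or.inr ⟨Or.inl rfl, hvt⟩
            · exact Or.inl rfl
            · exact Or.inr ⟨Or.inr ⟨hwB, hwb⟩, hwt⟩
          · rintro (rfl | ⟨(rfl | ⟨hwB, hwb⟩), hwt⟩)
            · exact Or.inr ⟨Or.inl rfl, heb⟩
            · exact Or.inl rfl
            · exact Or.inr ⟨Or.inr ⟨hwB, hwt⟩, hwb⟩
        rw [hkey] at hsbase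
        exact ⟨heB', t, htB', het, (hmem _).2 hsbase⟩
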